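/- Let (C,d) be a nonarchimedean normed chain complex over K with finite boundary depth β(C,d) < ∞. Then the range of d is a closed subspace of C; consequently the homology ker d / range d, equipped with the quotient norm, is itself a nonarchimedean Banach space over K. -/

import Mathlib

open scoped ENNReal

open Classical in
/-- The boundary depth `β(C,d) ∈ [0,∞]` of a norm-nonincreasing differential `d` on a
nonarchimedean normed chain complex `C`. -/
noncomputable def boundaryDepth {C : Type*} [NormedAddCommGroup C] (d : C → C) : ℝ≥0∞ :=
  if ∀ x, d x = 0 then 0
  else
    ⨆ x ∈ {x : C | x ≠ 0 ∧ ∃ y, d y = x},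
      ⨅ y ∈ {y : C | d y = x}, ENNReal.ofReal (Real.log ‖y‖ - Real.log ‖x‖)

/-- The homology `ker d / range d` of a chain complex `(C,d)`, formed as the quotient of
the kernel of `d` by the range of `d` (viewed inside the kernel); it carries the quotient
(semi)norm. -/
abbrev homologyOf {K : Type*} [NormedField K] {C : Type*} [NormedAddCommGroup C]
    [NormedSpace K C] (d : C →L[K] C) : Type _ :=
  ↥(LinearMap.ker (d : C →ₗ[K] C)) ⧸ Submodule.comap (LinearMap.ker (d : C →ₗ[K] C)).subtype (LinearMap.range (d : C →ₗ[K] C))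

/-- Controlled surjectivity onto the range, extracted from finiteness of the
boundary depth. -/
theorem exists_controlled_preimage
    {K : Type*} [NormedField K]
    {C : Type*} [NormedAddCommGroup C] [NormedSpace K C]
    (d : C →L[K] C)
    (hfin : boundaryDepth (fun x => d x) < ⊤) :
    ∃ M : ℝ, 0 < M ∧ ∀ x, (∃ y, d y = x) → ∃ y, d y = x ∧ ‖y‖ ≤ M * ‖x‖ := by
  classical
  by_cases h0 : ∀ x : C, d x = 0
  · refine ⟨1, one_pos, fun x hx => ?_⟩
    obtain ⟨y, rfl⟩ := hx
    exact ⟨0, by simp [h0], by simp [h0 y]⟩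
  · set B : ℝ≥0∞ := boundaryDepth (fun x => d x) with hB
    have hBdef : B = ⨆ x ∈ {x : C | x ≠ 0 ∧ ∃ y, d y = x},
        ⨅ y ∈ {y : C | d y = x}, ENNReal.ofReal (Real.log ‖y‖ - Real.log ‖x‖) := by
      rw [hB, boundaryDepth, if_neg h0]
    have hB1top : B + 1 ≠ ⊤ := by
      exact ENNReal.add_ne_top.mpr ⟨hfin.ne, ENNReal.one_ne_top⟩
    set r : ℝ := (B + 1).toReal with hr
    have hr0 : 0 < r := by
      rw [hr]
      apply ENNReal.toReal_pos
      · exact (zero_lt_one.trans_le (le_add_self : (1:ℝ≥0∞) ≤ B + 1)).ne'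
      · exact hB1top
    refine ⟨Real.exp r, Real.exp_pos r, fun x hx => ?_⟩
    by_cases hx0 : x = 0
    · exact ⟨0, by simp [hx0], by simp [hx0]⟩
    · have hmem : x ∈ {x : C | x ≠ 0 ∧ ∃ y, d y = x} := ⟨hx0, hx⟩
      have hle : (⨅ y ∈ {y : C | d y = x},
          ENNReal.ofReal (Real.log ‖y‖ - Real.log ‖x‖)) ≤ B := by
        rw [hBdef]
        exact le_iSup₂ (f := fun x _ => ⨅ y ∈ {y : C | d y = x},
          ENNReal.ofReal (Real.log ‖y‖ - Real.log ‖x‖)) x hmem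
      have hlt : (⨅ y ∈ {y : C | d y = x},
          ENNReal.ofReal (Real.log ‖y‖ - Real.log ‖x‖)) < B + 1 :=
        hle.trans_lt (ENNReal.lt_add_right hfin.ne one_ne_zero)
      rw [iInf_lt_iff] at hlt
      obtain ⟨y, hy⟩ := hlt
      rw [iInf_lt_iff] at hy
      obtain ⟨hyx, hylt⟩ := hy
      have hyx' : d y = x := hyx
      have hy0 : y ≠ 0 := by
        rintro rfl
        exact hx0 (by simpa using hyx'.symm)
      have hxpos : (0:ℝ) < ‖x‖ := norm_pos_iff.mpr hx0
      have hypos : (0:ℝ) < ‖y‖ := norm_pos_iff.mpr hy0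
      refine ⟨y, hyx', ?_⟩
      have hlog : Real.log ‖y‖ - Real.log ‖x‖ < r := by
        by_cases hneg : Real.log ‖y‖ - Real.log ‖x‖ < 0
        · exact hneg.trans hr0
        · push_neg at hneg
          have := (ENNReal.ofReal_lt_iff_lt_toReal hneg hB1top).mp hylt
          simpa [hr] using this
      have : Real.log ‖y‖ < Real.log (Real.exp r * ‖x‖) := by
        rw [Real.log_mul (Real.exp_ne_zero r) hxpos.ne', Real.log_exp]
        linarith
      have := (Real.log_lt_log_iff hypos (by positivity)).mp this
      exact this.le

/-- If a nonarchimedean normed chain complex `(C,d)` over `K` has finite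
boundary depth, then the range of `d` is closed; consequently the homology
`ker d / range d`, equipped with the quotient norm, is itself a nonarchimedean Banach
space over `K` (the quotient seminorm is a genuine norm, it is nonarchimedean, scalars
act isometrically, and the quotient is complete). -/
theorem isClosed_range_of_finite_boundaryDepth
    {K : Type*} [NormedField K] [IsUltrametricDist K] [CompleteSpace K]
    {C : Type*} [NormedAddCommGroup C] [NormedSpace K C] [CompleteSpace C]
    [IsUltrametricDist C]
    (d : C →L[K] C) (hd2 : ∀ x, d (d x) = 0) (hd1 : ∀ x, ‖d x‖ ≤ ‖x‖)
    (hfin : boundaryDepth (fun x => d x) < ⊤) :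
    IsClosed (Set.range fun x : C => d x) ∧
    (∀ z : homologyOf d, ‖z‖ = 0 → z = 0) ∧
    (∀ z w : homologyOf d, ‖z + w‖ ≤ max ‖z‖ ‖w‖) ∧
    (∀ (a : K) (z : homologyOf d), ‖a • z‖ = ‖a‖ * ‖z‖) ∧
    CompleteSpace (homologyOf d) := by
  -- Step 1: the range of `d` is closed.
  obtain ⟨M, hM0, hM⟩ := exists_controlled_preimage d hfin
  let f : NormedAddGroupHom C C :=
    AddMonoidHom.mkNormedAddGroupHom d.toLinearMap.toAddMonoidHom 1
      (fun v => by simpa using hd1 v)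
  have hf : ∀ v, f v = d v := fun v => rfl
  have hyp : f.SurjectiveOnWith (LinearMap.range (d : C →ₗ[K] C)).toAddSubgroup M := by
    intro x hx
    obtain ⟨y, hy1, hy2⟩ := hM x (by simpa [LinearMap.mem_range] using hx)
    exact ⟨y, hy1, hy2⟩
  have hyp' := controlled_closure_of_complete hM0 one_pos hyp
  have hclosed : IsClosed (Set.range fun x : C => d x) := by
    apply isClosed_of_closure_subset
    intro x hx
    have hx' : x ∈ (LinearMap.range (d : C →ₗ[K] C)).toAddSubgroup.topologicalClosure := by
      have : (((LinearMap.range (d : C →ₗ[K] C)).toAddSubgroup : AddSubgroup C) : Set C)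
          = Set.range fun x : C => d x := by
        ext v; simp [LinearMap.mem_range]
      show x ∈ closure (((LinearMap.range (d : C →ₗ[K] C)).toAddSubgroup : AddSubgroup C) : Set C)
      rw [this]; exact hx
    obtain ⟨g, hg, -⟩ := hyp' x hx'
    exact ⟨g, hg⟩
  refine ⟨hclosed, ?_, ?_, ?_, ?_⟩
  -- Notation for the submodule we quotient by.
  · -- the quotient seminorm is a norm
    intro z hz
    obtain ⟨m, rfl⟩ := Submodule.Quotient.mk_surjective _ z
    have hz' : (m : ↥(LinearMap.ker (d : C →ₗ[K] C))) ∈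
        closure ((Submodule.comap (LinearMap.ker (d : C →ₗ[K] C)).subtype (LinearMap.range (d : C →ₗ[K] C)) :
          Submodule K ↥(LinearMap.ker (d : C →ₗ[K] C))) : Set ↥(LinearMap.ker (d : C →ₗ[K] C))) :=
      (QuotientAddGroup.norm_mk_eq_zero_iff_mem_closure (m := m)).mp hz
    have hcl : IsClosed ((Submodule.comap (LinearMap.ker (d : C →ₗ[K] C)).subtype (LinearMap.range (d : C →ₗ[K] C)) :
        Submodule K ↥(LinearMap.ker (d : C →ₗ[K] C))) : Set ↥(LinearMap.ker (d : C →ₗ[K] C))) := by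
      have : ((Submodule.comap (LinearMap.ker (d : C →ₗ[K] C)).subtype (LinearMap.range (d : C →ₗ[K] C)) :
          Submodule K ↥(LinearMap.ker (d : C →ₗ[K] C))) : Set ↥(LinearMap.ker (d : C →ₗ[K] C)))
          = (Subtype.val) ⁻¹' (Set.range fun x : C => d x) := by
        ext v; simp [Submodule.mem_comap, LinearMap.mem_range]
      rw [this]
      exact hclosed.preimage continuous_subtype_val
    rw [hcl.closure_eq] at hz'
    simpa [Submodule.Quotient.mk_eq_zero] using hz'
  · -- nonarchimedean
    intro z w
    refine le_of_forall_pos_le_add fun ε hε => ?_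
    obtain ⟨m, rfl, hm⟩ := Submodule.Quotient.norm_mk_lt z hε
    obtain ⟨n, rfl, hn⟩ := Submodule.Quotient.norm_mk_lt w hε
    calc ‖(Submodule.Quotient.mk m + Submodule.Quotient.mk n : homologyOf d)‖
        = ‖(Submodule.Quotient.mk (m + n) : homologyOf d)‖ := by
          rw [← Submodule.Quotient.mk_add]
      _ ≤ ‖m + n‖ := Submodule.Quotient.norm_mk_le _ _
      _ ≤ max ‖m‖ ‖n‖ := IsUltrametricDist.norm_add_le_max m n
      _ ≤ max (‖(Submodule.Quotient.mk m : homologyOf d)‖ + ε)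
            (‖(Submodule.Quotient.mk n : homologyOf d)‖ + ε) :=
          max_le_max hm.le hn.le
      _ ≤ max ‖(Submodule.Quotient.mk m : homologyOf d)‖
            ‖(Submodule.Quotient.mk n : homologyOf d)‖ + ε := by
          rw [max_add_add_right]
  · -- scalars act isometrically
    intro a z
    exact norm_smul a z
  · -- completeness
    infer_instance
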